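/- In model (6) (m₂₁ = m₃₁ = m₂₃ = 0, all other parameters positive), the equilibrium I₂ = (k₁, 0, 0) is locally asymptotically stable if and only if r₂ < m₁₂ + m₃₂ and r₃ < m₁₃; moreover, when I₂ is stable, the equilibrium I₃ = (α, 0, β) with β = (k₃/r₃)(r₃ − m₁₃) is infeasible (β < 0) and the coexistence equilibrium is infeasible ((k₂/r₂)(r₂ − m₁₂ − m₃₂) < 0). -/
import Mathlib

open Matrix in
lemma spectrum_aux (a b c d e f : ℂ) (μ : ℂ) :
    μ ∈ spectrum ℂ (!![a, d, e; 0, b, 0; 0, f, c]) ↔ (μ = a ∨ μ = b ∨ μ = c) := by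
  rw [spectrum.mem_iff, Matrix.isUnit_iff_isUnit_det, isUnit_iff_ne_zero, not_not]
  rw [show (algebraMap ℂ (Matrix (Fin 3) (Fin 3) ℂ)) μ = Matrix.scalar (Fin 3) μ from rfl]
  simp [Matrix.det_fin_three, Matrix.scalar_apply, Matrix.vecHead, Matrix.vecTail, sub_eq_zero]
  tauto

open Matrix in
/-- Model (6): `I₂ = (k₁, 0, 0)` is locally asymptotically stable iff
`r₂ < m₁₂ + m₃₂` and `r₃ < m₁₃`; when it is stable, the equilibrium `I₃`
and the coexistence equilibrium are infeasible. -/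
theorem model6_I2_stability_excludes_other_equilibria
    (r₁ r₂ r₃ k₁ k₂ k₃ m₁₂ m₁₃ m₃₂ : ℝ)
    (hr₁ : 0 < r₁) (hr₂ : 0 < r₂) (hr₃ : 0 < r₃)
    (hk₁ : 0 < k₁) (hk₂ : 0 < k₂) (hk₃ : 0 < k₃)
    (hm₁₂ : 0 < m₁₂) (hm₁₃ : 0 < m₁₃) (hm₃₂ : 0 < m₃₂)
    (J : Matrix (Fin 3) (Fin 3) ℝ)
    (hJ : J = !![-r₁, m₁₂, m₁₃;
                 0, r₂ - m₁₂ - m₃₂, 0;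
                 0, m₃₂, r₃ - m₁₃]) :
    ((∀ μ ∈ spectrum ℂ (J.map (Complex.ofReal)), μ.re < 0) ↔
      (r₂ < m₁₂ + m₃₂ ∧ r₃ < m₁₃)) ∧
    (r₂ < m₁₂ + m₃₂ ∧ r₃ < m₁₃ →
      (k₃ / r₃) * (r₃ - m₁₃) < 0 ∧ (k₂ / r₂) * (r₂ - m₁₂ - m₃₂) < 0) := by
  have hmap : J.map (Complex.ofReal) =
      !![((-r₁ : ℝ) : ℂ), ((m₁₂ : ℝ) : ℂ), ((m₁₃ : ℝ) : ℂ);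
         0, ((r₂ - m₁₂ - m₃₂ : ℝ) : ℂ), 0;
         0, ((m₃₂ : ℝ) : ℂ), ((r₃ - m₁₃ : ℝ) : ℂ)] := by
    subst hJ
    ext i j
    fin_cases i <;> fin_cases j <;> simp [Matrix.map_apply, Matrix.vecHead, Matrix.vecTail]
  have hspec : ∀ μ : ℂ, μ ∈ spectrum ℂ (J.map (Complex.ofReal)) ↔
      (μ = ((-r₁ : ℝ) : ℂ) ∨ μ = ((r₂ - m₁₂ - m₃₂ : ℝ) : ℂ) ∨ μ = ((r₃ - m₁₃ : ℝ) : ℂ)) := by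
    intro μ; rw [hmap]; exact spectrum_aux _ _ _ _ _ _ μ
  constructor
  · constructor
    · intro h
      have h2 := h _ ((hspec _).2 (Or.inr (Or.inl rfl)))
      have h3 := h _ ((hspec _).2 (Or.inr (Or.inr rfl)))
      simp [Complex.ofReal_re] at h2 h3
      constructor <;> linarith
    · rintro ⟨h2, h3⟩ μ hμ
      rcases (hspec μ).1 hμ with rfl | rfl | rfl <;>
        simp [Complex.ofReal_re] <;> linarith
  · rintro ⟨h2, h3⟩
    constructor
    · have : (0:ℝ) < k₃ / r₃ := div_pos hk₃ hr₃
      nlinarith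
    · have : (0:ℝ) < k₂ / r₂ := div_pos hk₂ hr₂
      nlinarith
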